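/- Let q be an odd prime power and c ∈ F_{q^2} with (c/2)^{(q+1)/2} = 1. Let u and v be odd positive integers and set h(x) = c + x^u(x^{(q+1)v/2} - 1). Then f(x) = x^r h(x^{q-1}) is a permutation polynomial of F_{q^2} if and only if gcd(r, (q^2-1)/2) = 1 and gcd(r-u, (q+1)/2) = 1. -/

import Mathlib

set_option maxHeartbeats 2000000 in
theorem stmt12 (p pn q : ℕ) (hp : p.Prime) (hpn : 0 < pn) (hq : q = p ^ pn)
    (hodd : Odd q)
    (F : Type*) [Field F] [Fintype F] (hF : Fintype.card F = q ^ 2)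
    (c : F) (hc : (c / 2) ^ ((q + 1) / 2) = 1)
    (u v : ℕ) (hu : Odd u) (hv : Odd v) (hu0 : 0 < u) (hv0 : 0 < v) (r : ℕ) :
    Function.Bijective (fun x : F => x ^ r *
      (c + (x ^ (q - 1)) ^ u * ((x ^ (q - 1)) ^ ((q + 1) * v / 2) - 1))) ↔
      (Nat.gcd r ((q ^ 2 - 1) / 2) = 1 ∧
        Int.gcd ((r : ℤ) - u) (((q + 1) / 2 : ℕ) : ℤ) = 1) := by
  classical
  -- basic numerology
  obtain ⟨w, hw⟩ := hodd
  have hq2' : 2 ≤ q := by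
    rw [hq]; exact Nat.one_lt_pow (by omega) hp.two_le
  have hq3 : 3 ≤ q := by omega
  have hw1 : 1 ≤ w := by omega
  set k : ℕ := (q + 1) / 2 with hkdef
  have hk : q + 1 = 2 * k := by omega
  have hk2 : 2 ≤ k := by omega
  set m : ℕ := (q - 1) * k with hmdef
  have hm2 : 4 ≤ m := by
    calc 4 = 2 * 2 := rfl
    _ ≤ (q - 1) * k := Nat.mul_le_mul (by omega) hk2
  have hsq : ∀ N : ℕ, 1 ≤ N → (N + 1) * (N - 1) + 1 = N * N := by
    intro N hN
    rcases N with _ | M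
    · omega
    · simp only [Nat.succ_sub_one]; ring
  have hqsq : q ^ 2 = 2 * m + 1 := by
    rw [sq, ← hsq q (by omega), hk, hmdef]; ring
  have hn : q ^ 2 - 1 = 2 * m := by omega
  have hmhalf : (q ^ 2 - 1) / 2 = m := by omega
  have hmeven : 2 ∣ m := by
    have h1 : q - 1 = 2 * w := by omega
    rw [hmdef, h1, mul_assoc]; exact Dvd.intro _ rfl
  have hq1m : (q - 1) ∣ m := Dvd.intro _ rfl
  have hexp : (q + 1) * v / 2 = k * v := by
    rw [hk, mul_assoc]
    exact Nat.mul_div_cancel_left _ (by norm_num)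
  -- characteristic facts
  haveI : Fact p.Prime := ⟨hp⟩
  have hcharF : CharP F p := by
    have hchar : CharP F (ringChar F) := ringChar.charP F
    obtain ⟨n', hprime, hcard⟩ := FiniteField.card F (ringChar F)
    have hdvd : p ∣ Fintype.card F := by
      rw [hF, hq, ← pow_mul]
      exact dvd_pow_self p (by positivity)
    rw [hcard] at hdvd
    have : p ∣ ringChar F := hp.dvd_of_dvd_pow hdvd
    have hpe : p = ringChar F := (Nat.prime_dvd_prime_iff_eq hp hprime).mp this
    rwa [← hpe] at hchar
  have hpodd : p ≠ 2 := by
    rintro rfl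
    have : 2 ∣ q := by rw [hq]; exact dvd_pow_self 2 (by omega)
    omega
  have h2 : (2 : F) ≠ 0 := by
    intro h
    have h' : ((2 : ℕ) : F) = 0 := by push_cast; exact h
    have hpd : p ∣ 2 := (CharP.cast_eq_zero_iff F p 2).mp h'
    exact hpodd ((Nat.prime_dvd_prime_iff_eq hp Nat.prime_two).mp hpd)
  have hneg : (-1 : F) ≠ 1 := by
    intro h
    exact h2 (by linear_combination -h)
  have hfrobq : ∀ x y : F, (x - y) ^ q = x ^ q - y ^ q := by
    intro x y; rw [hq]; exact sub_pow_char_pow x y pn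
  have h2pow : (2 : F) ^ (q - 1) = 1 := by
    have h2q : (2 : F) ^ q = 2 := by
      have h' := add_pow_char_pow (R := F) (p := p) (1 : F) 1 (n := pn)
      rw [← hq] at h'
      simp only [one_pow] at h'
      rw [show (2 : F) = 1 + 1 by norm_num]
      exact h'
    have h'' : (2 : F) ^ (q - 1) * 2 = 1 * 2 := by
      rw [one_mul, ← pow_succ, show q - 1 + 1 = q by omega]
      exact h2q
    exact mul_right_cancel₀ h2 h''
  have hpown : ∀ x : F, x ≠ 0 → x ^ (q ^ 2 - 1) = 1 := by
    intro x hx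
    have h' := FiniteField.pow_card_sub_one_eq_one x hx
    rwa [hF] at h'
  have hchi : ∀ x : F, x ≠ 0 → x ^ m = 1 ∨ x ^ m = -1 := by
    intro x hx
    have h' : x ^ m * x ^ m = 1 := by
      rw [← pow_add, ← two_mul, ← hn]; exact hpown x hx
    exact mul_self_eq_one_iff.mp h'
  -- key computation on roots of unity
  have hkey : ∀ a b : F, a ^ k = 1 → b ^ k = -1 →
      a - b ≠ 0 ∧ (a - b) ^ (q - 1) = -(a * b)⁻¹ := by
    intro a b ha hb
    have ha0 : a ≠ 0 := by
      intro h; rw [h, zero_pow (by omega : k ≠ 0)] at ha; exact zero_ne_one ha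
    have hb0 : b ≠ 0 := by
      intro h; rw [h, zero_pow (by omega : k ≠ 0)] at hb
      exact one_ne_zero (α := F) (by linear_combination hb)
    have hab : a ≠ b := by
      rintro rfl; rw [ha] at hb; exact hneg hb.symm
    have hsub : a - b ≠ 0 := sub_ne_zero.mpr hab
    refine ⟨hsub, ?_⟩
    have haq : a ^ q = a⁻¹ := by
      have h1 : a ^ q * a = 1 := by
        rw [← pow_succ, hk, mul_comm, pow_mul, ha, one_pow]
      exact eq_inv_of_mul_eq_one_left h1
    have hbq : b ^ q = b⁻¹ := by
      have h1 : b ^ q * b = 1 := by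
        rw [← pow_succ, hk, mul_comm, pow_mul, hb]; norm_num
      exact eq_inv_of_mul_eq_one_left h1
    have hq' : (a - b) ^ q = a⁻¹ - b⁻¹ := by rw [hfrobq, haq, hbq]
    have h3 : (a - b) ^ (q - 1) * (a - b) = -(a * b)⁻¹ * (a - b) := by
      rw [← pow_succ, show q - 1 + 1 = q by omega, hq']
      field_simp
      all_goals ring
    exact mul_right_cancel₀ hsub h3
  have hkeym : ∀ a b : F, a ^ k = 1 → b ^ k = -1 → (a - b) ^ m = -(-1 : F) ^ k := by
    intro a b ha hb
    have habk : (a * b) ^ k = -1 := by rw [mul_pow, ha, hb, one_mul]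
    rw [hmdef, pow_mul, (hkey a b ha hb).2]
    have h1 : (-(a * b)⁻¹) ^ k = (-1 : F) ^ k * ((a * b) ^ k)⁻¹ := by
      rw [← inv_pow]; ring
    rw [h1, habk]
    rw [inv_neg, inv_one]
    ring
  -- facts about c
  have hcne : c ≠ 0 := by
    intro h
    rw [h, zero_div, zero_pow (by omega : k ≠ 0)] at hc
    exact zero_ne_one hc
  have ha0 : c / 2 ≠ 0 := div_ne_zero hcne h2
  have hcm : c ^ m = 1 := by
    have hcc : c = 2 * (c / 2) := by field_simp
    rw [hcc, mul_pow]
    have e1 : (2 : F) ^ m = 1 := by rw [hmdef, pow_mul, h2pow, one_pow]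
    have e2 : (c / 2) ^ m = 1 := by rw [hmdef, mul_comm, pow_mul, hc, one_pow]
    rw [e1, e2, one_mul]
  -- branch formulas
  set fn := fun x : F => x ^ r *
      (c + (x ^ (q - 1)) ^ u * ((x ^ (q - 1)) ^ ((q + 1) * v / 2) - 1)) with hfn
  have hcommon : ∀ x : F, (x ^ (q - 1)) ^ ((q + 1) * v / 2) = (x ^ m) ^ v := by
    intro x
    rw [hexp, ← pow_mul, ← pow_mul, hmdef, mul_assoc]
  have hfS : ∀ x : F, x ^ m = 1 → fn x = c * x ^ r := by
    intro x hxm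
    simp only [hfn]
    rw [hcommon, hxm, one_pow, sub_self, mul_zero, add_zero, mul_comm]
  have hfN : ∀ x : F, x ^ m = -1 → fn x = x ^ r * (c - 2 * x ^ ((q - 1) * u)) := by
    intro x hxm
    simp only [hfn]
    rw [hcommon, hxm, hv.neg_one_pow, ← pow_mul]
    ring
  have hbk : ∀ x : F, x ^ m = -1 → (x ^ ((q - 1) * u)) ^ k = -1 := by
    intro x hxm
    rw [← pow_mul, show (q - 1) * u * k = m * u by rw [hmdef]; ring, pow_mul, hxm]
    exact hu.neg_one_pow
  have hNne : ∀ x : F, x ^ m = -1 → c - 2 * x ^ ((q - 1) * u) ≠ 0 := by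
    intro x hxm
    have hsplit : c - 2 * x ^ ((q - 1) * u) = 2 * (c / 2 - x ^ ((q - 1) * u)) := by
      field_simp
    rw [hsplit]
    exact mul_ne_zero h2 (hkey _ _ hc (hbk x hxm)).1
  have hfN0 : ∀ x : F, x ≠ 0 → x ^ m = -1 → fn x ≠ 0 := by
    intro x hx0 hxm
    rw [hfN x hxm]
    exact mul_ne_zero (pow_ne_zero _ hx0) (hNne x hxm)
  have hNm : ∀ x : F, x ^ m = -1 → (c - 2 * x ^ ((q - 1) * u)) ^ m = -(-1 : F) ^ k := by
    intro x hxm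
    have hsplit : c - 2 * x ^ ((q - 1) * u) = 2 * (c / 2 - x ^ ((q - 1) * u)) := by
      field_simp
    rw [hsplit, mul_pow, show (2 : F) ^ m = 1 by rw [hmdef, pow_mul, h2pow, one_pow],
      one_mul]
    exact hkeym _ _ hc (hbk x hxm)
  have hstar : ∀ x : F, x ≠ 0 → x ^ m = -1 →
      (fn x) ^ (q - 1) * (c / 2 * (x ^ (q - 1)) ^ u) = -(x ^ (q - 1)) ^ r := by
    intro x hx0 hxm
    have hb0 : x ^ ((q - 1) * u) ≠ 0 := pow_ne_zero _ hx0
    have hsplit : c - 2 * x ^ ((q - 1) * u) = 2 * (c / 2 - x ^ ((q - 1) * u)) := by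
      field_simp
    have hpu : (x ^ (q - 1)) ^ u = x ^ ((q - 1) * u) := by rw [← pow_mul]
    have hpr : (x ^ (q - 1)) ^ r = x ^ ((q - 1) * r) := by rw [← pow_mul]
    rw [hpu, hpr, hfN x hxm, mul_pow, hsplit, mul_pow, h2pow, one_mul,
      (hkey _ _ hc (hbk x hxm)).2, ← pow_mul, mul_comm r (q - 1)]
    field_simp
    all_goals ring
  -- order-of-element helpers
  have hcollapse : ∀ (j j' : ℕ), Nat.gcd j j' = 1 → ∀ t : F, t ^ j = 1 → t ^ j' = 1 → t = 1 := by
    intro j j' hjj t htj htj'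
    have h1 : orderOf t ∣ j := orderOf_dvd_of_pow_eq_one htj
    have h2' : orderOf t ∣ j' := orderOf_dvd_of_pow_eq_one htj'
    have : orderOf t ∣ 1 := hjj ▸ Nat.dvd_gcd h1 h2'
    exact orderOf_eq_one_iff.mp (Nat.dvd_one.mp this)
  have hmodEq : ∀ t : F, t ≠ 0 → ∀ a b : ℕ, t ^ a = t ^ b → a ≡ b [MOD orderOf t] := by
    intro t ht a b hab
    set tu : Fˣ := Units.mk0 t ht with htu
    have ho : orderOf tu = orderOf t := by
      rw [← orderOf_units, htu, Units.val_mk0]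
    have hab' : tu ^ a = tu ^ b := by
      apply Units.ext
      push_cast
      rw [htu, Units.val_mk0]
      exact hab
    have h' := pow_eq_pow_iff_modEq.mp hab'
    rwa [ho] at h'
  have hmodEq' : ∀ t : F, t ≠ 0 → ∀ a b : ℕ, a ≡ b [MOD orderOf t] → t ^ a = t ^ b := by
    intro t ht a b hab
    set tu : Fˣ := Units.mk0 t ht with htu
    have ho : orderOf tu = orderOf t := by
      rw [← orderOf_units, htu, Units.val_mk0]
    rw [← ho] at hab
    have h' := pow_eq_pow_iff_modEq.mpr hab
    have h'' := congrArg Units.val h'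
    push_cast at h''
    rwa [htu, Units.val_mk0] at h''
  -- the cyclic generator
  obtain ⟨g, hg⟩ := IsCyclic.exists_generator (α := Fˣ)
  have hcardu : Fintype.card Fˣ = q ^ 2 - 1 := by rw [Fintype.card_units, hF]
  have hgord : orderOf g = q ^ 2 - 1 := by
    rw [orderOf_eq_card_of_forall_mem_zpowers hg, Nat.card_eq_fintype_card, hcardu]
  have hgpow : ∀ j : ℕ, ((g : F) ^ j = 1 ↔ (q ^ 2 - 1) ∣ j) := by
    intro j
    rw [← hgord]
    constructor
    · intro hj
      apply orderOf_dvd_of_pow_eq_one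
      ext
      push_cast
      exact hj
    · intro hj
      have := orderOf_dvd_iff_pow_eq_one.mp hj
      have := congrArg (Units.val) this
      push_cast at this
      exact this
  have hg0 : (g : F) ≠ 0 := Units.ne_zero g
  have hgm : (g : F) ^ m = -1 := by
    rcases hchi (g : F) hg0 with h1 | h1
    · exfalso
      have hdvd := (hgpow m).mp h1
      have := Nat.le_of_dvd (by omega) hdvd
      omega
    · exact h1
  have hSm : ∀ x : F, x ^ m = 1 → (fn x) ^ m = 1 := by
    intro x hxm
    rw [hfS x hxm, mul_pow, hcm, one_mul, ← pow_mul, mul_comm r m, pow_mul, hxm, one_pow]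
  have hfn1 : fn 1 = c := by
    have h' := hfS 1 (one_pow m)
    rw [h', one_pow, mul_one]
  rw [hmhalf]
  constructor
  · -- forward direction
    intro hbij
    have hinj := hbij.injective
    have hrm : Nat.gcd r m = 1 := by
      by_contra hne
      rcases Nat.eq_zero_or_pos r with hr0 | hr0
      · have hfn0 : fn 0 = c := by
          simp only [hfn]
          rw [hr0, pow_zero, one_mul, zero_pow (by omega : q - 1 ≠ 0),
            zero_pow hu0.ne', zero_mul, add_zero]
        exact zero_ne_one (hinj (hfn0.trans hfn1.symm))
      · set d := Nat.gcd r m with hd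
        have hdr : d ∣ r := Nat.gcd_dvd_left r m
        have hdm : d ∣ m := Nat.gcd_dvd_right r m
        have hd0 : 0 < d := Nat.gcd_pos_of_pos_left _ hr0
        have hd2 : 2 ≤ d := by omega
        have hmn : m ∣ q ^ 2 - 1 := ⟨2, by omega⟩
        have hdn : d ∣ q ^ 2 - 1 := hdm.trans hmn
        have hNd : (q ^ 2 - 1) / d * d = q ^ 2 - 1 := Nat.div_mul_cancel hdn
        set ξ := (g : F) ^ ((q ^ 2 - 1) / d) with hxi
        have hξm : ξ ^ m = 1 := by
          rw [hxi, ← pow_mul, hgpow]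
          obtain ⟨m', hm'⟩ := hdm
          exact ⟨m', by rw [hm', ← mul_assoc, hNd]⟩
        have hξr : ξ ^ r = 1 := by
          rw [hxi, ← pow_mul, hgpow]
          obtain ⟨r', hr'⟩ := hdr
          exact ⟨r', by rw [hr', ← mul_assoc, hNd]⟩
        have hξ1 : ξ ≠ 1 := by
          rw [hxi]
          intro h1
          have hdd := (hgpow ((q ^ 2 - 1) / d)).mp h1
          have h3 : (q ^ 2 - 1) / d ≤ (q ^ 2 - 1) / 2 := Nat.div_le_div_left hd2 (by omega)
          have h4 : 0 < (q ^ 2 - 1) / d := Nat.div_pos (Nat.le_of_dvd (by omega) hdn) (by omega)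
          have h5 := Nat.le_of_dvd h4 hdd
          omega
        have hfξ : fn ξ = c := by rw [hfS ξ hξm, hξr, mul_one]
        exact hξ1 (hinj (hfξ.trans hfn1.symm))
    refine ⟨hrm, ?_⟩
    have hr0 : 0 < r := by
      rcases Nat.eq_zero_or_pos r with h | h
      · rw [h, Nat.gcd_zero_left] at hrm; omega
      · exact h
    have hfn0 : fn 0 = 0 := by
      simp only [hfn]; rw [zero_pow hr0.ne', zero_mul]
    have hNchi : ∀ x : F, x ≠ 0 → x ^ m = -1 → (fn x) ^ m = -1 := by
      intro x hx0 hxm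
      rcases hchi (fn x) (hfN0 x hx0 hxm) with h1 | h1
      swap
      · exact h1
      exfalso
      have hz0 : fn x / c ≠ 0 := div_ne_zero (hfN0 x hx0 hxm) hcne
      set z : Fˣ := Units.mk0 (fn x / c) hz0 with hz
      have hzm : z ^ m = 1 := by
        apply Units.ext
        push_cast
        rw [hz, Units.val_mk0, div_pow, h1, hcm]
        norm_num
      set T : Set Fˣ := {h : Fˣ | h ^ m = 1} with hT
      have hmap : Set.MapsTo (· ^ r) T T := by
        intro t ht
        simp only [hT, Set.mem_setOf_eq] at *
        rw [← pow_mul, mul_comm, pow_mul, ht, one_pow]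
      have hinjT : Set.InjOn (· ^ r) T := by
        intro s hs t ht hst
        simp only [hT, Set.mem_setOf_eq] at hs ht
        simp only at hst
        have hs' : ((s : F) / t) ^ r = 1 := by
          rw [div_pow]
          have := congrArg Units.val hst
          push_cast at this
          rw [this, div_self (pow_ne_zero _ (Units.ne_zero t))]
        have ht' : ((s : F) / t) ^ m = 1 := by
          rw [div_pow]
          have h1 := congrArg Units.val hs
          have h2' := congrArg Units.val ht
          push_cast at h1 h2'
          rw [h1, h2', div_one]
        have := hcollapse r m hrm _ hs' ht'
        have hval : (s : F) = t := by
          field_simp at this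
          exact this
        exact Units.ext hval
      have hsurj : Set.SurjOn (· ^ r) T T :=
        ((Set.Finite.injOn_iff_bijOn_of_mapsTo (Set.toFinite T) hmap).mp hinjT).surjOn
      obtain ⟨y, hyT, hyr⟩ := hsurj (show z ∈ T from hzm)
      simp only at hyr
      have hym : (y : F) ^ m = 1 := by
        have h' := congrArg Units.val hyT.out
        push_cast at h'
        exact h'
      have hfy : fn (y : F) = fn x := by
        rw [hfS _ hym]
        have h' := congrArg Units.val hyr
        push_cast at h'
        rw [hz, Units.val_mk0] at h'
        rw [h']
        field_simp
      have heq := hinj hfy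
      rw [← heq, hym] at hxm
      exact hneg hxm.symm
    by_contra hne
    set d := Int.gcd ((r : ℤ) - u) (k : ℤ) with hd
    have hdk : d ∣ k := by
      have h' : ((Int.gcd ((r : ℤ) - u) (k : ℤ) : ℕ) : ℤ) ∣ (k : ℤ) := Int.gcd_dvd_right _ _
      exact Int.natCast_dvd_natCast.mp h'
    have hdru : (d : ℤ) ∣ (r : ℤ) - u := Int.gcd_dvd_left _ _
    have hd0 : d ≠ 0 := by
      intro h
      have h' := Int.gcd_eq_zero_iff.mp (hd ▸ h)
      have : (k : ℤ) = 0 := h'.2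
      omega
    have hd2 : 2 ≤ d := by omega
    set ρ₁ := (g : F) ^ (2 * (q - 1)) with hρ₁
    have hNval : 2 * (q - 1) * k = q ^ 2 - 1 := by
      rw [hn, hmdef]; ring
    have hρ₁k : ρ₁ ^ k = 1 := by
      rw [hρ₁, ← pow_mul]
      exact (hgpow _).mpr ⟨1, by rw [mul_one, hNval]⟩
    have hkd : k / d * d = k := Nat.div_mul_cancel hdk
    have hρ₁d : ρ₁ ^ (k / d) ≠ 1 := by
      rw [hρ₁, ← pow_mul]
      intro hdd0
      have hdd := (hgpow _).mp hdd0
      set e := 2 * (q - 1) * (k / d) with he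
      have h1 : e * d = q ^ 2 - 1 := by
        rw [he, mul_assoc, hkd, hNval]
      have h2' : e * 2 ≤ e * d := Nat.mul_le_mul_left e hd2
      have h3 : 0 < e := by
        have h5 : 0 < k / d := Nat.div_pos (Nat.le_of_dvd (by omega) hdk) (by omega)
        rw [he]
        exact Nat.mul_pos (Nat.mul_pos (by norm_num) (by omega)) h5
      have h4 := Nat.le_of_dvd h3 hdd
      omega
    have hx₀0 : (g : F) ≠ 0 := hg0
    set s := (g : F) ^ 2 with hs
    have hsm : s ^ m = 1 := by
      rw [hs, ← pow_mul, show 2 * m = q ^ 2 - 1 by omega]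
      exact hpown _ hx₀0
    have hsq1 : s ^ (q - 1) = ρ₁ := by
      rw [hs, hρ₁, ← pow_mul]
    set y := fn (g : F) * s with hy
    have hy0 : y ≠ 0 := mul_ne_zero (hfN0 _ hx₀0 hgm) (pow_ne_zero _ hx₀0)
    have hym : y ^ m = -1 := by
      rw [hy, mul_pow, hNchi _ hx₀0 hgm, hsm, mul_one]
    obtain ⟨x₁, hx₁⟩ := hbij.surjective y
    have hx₁0 : x₁ ≠ 0 := by
      rintro rfl
      rw [hfn0] at hx₁
      exact hy0 hx₁.symm
    have hx₁m : x₁ ^ m = -1 := by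
      rcases hchi x₁ hx₁0 with h1 | h1
      · exfalso
        have h' := hSm x₁ h1
        rw [hx₁, hym] at h'
        exact hneg h'
      · exact h1
    have h6 : (fn x₁) ^ (q - 1) = (fn (g : F)) ^ (q - 1) * ρ₁ := by
      rw [hx₁, hy, mul_pow, hsq1]
    have hE0 := hstar (g : F) hx₀0 hgm
    have hE1 := hstar x₁ hx₁0 hx₁m
    set τ := x₁ ^ (q - 1) with hτ
    set σ := (g : F) ^ (q - 1) with hσ
    have hτ0 : τ ≠ 0 := pow_ne_zero _ hx₁0
    have hσ0 : σ ≠ 0 := pow_ne_zero _ hx₀0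
    have hτk : τ ^ k = -1 := by rw [hτ, ← pow_mul, ← hmdef]; exact hx₁m
    have hσk : σ ^ k = -1 := by rw [hσ, ← pow_mul, ← hmdef]; exact hgm
    have h7 : (-τ ^ r) * (c / 2 * σ ^ u) = (-σ ^ r) * ρ₁ * (c / 2 * τ ^ u) := by
      rw [← hE0, ← hE1, h6]; ring
    have h7' : τ ^ r * σ ^ u = σ ^ r * τ ^ u * ρ₁ := by
      apply mul_left_cancel₀ (neg_ne_zero.mpr ha0)
      linear_combination h7
    have hρ0 : τ / σ ≠ 0 := div_ne_zero hτ0 hσ0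
    have hρk : (τ / σ) ^ k = 1 := by
      rw [div_pow, hτk, hσk, neg_div_neg_eq, div_one]
    have hμ : (τ / σ) ^ r = (τ / σ) ^ u * ρ₁ := by
      rw [div_pow, div_pow, div_mul_eq_mul_div,
        div_eq_div_iff (pow_ne_zero _ hσ0) (pow_ne_zero _ hσ0)]
      linear_combination h7'
    have hordk : orderOf (τ / σ) ∣ k := orderOf_dvd_of_pow_eq_one hρk
    have hkdvd : (k : ℤ) ∣ ((r * (k / d) : ℕ) : ℤ) - ((u * (k / d) : ℕ) : ℤ) := by
      obtain ⟨e, he⟩ := hdru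
      have hK : ((d : ℕ) : ℤ) * ((k / d : ℕ) : ℤ) = (k : ℤ) := by
        exact_mod_cast Nat.mul_div_cancel' hdk
      refine ⟨e, ?_⟩
      rw [Nat.cast_mul, Nat.cast_mul]
      linear_combination ((k / d : ℕ) : ℤ) * he + e * hK
    have hmodeq : u * (k / d) ≡ r * (k / d) [MOD k] := Nat.modEq_iff_dvd.mpr hkdvd
    have hmodeq' : u * (k / d) ≡ r * (k / d) [MOD orderOf (τ / σ)] :=
      Nat.ModEq.of_dvd hordk hmodeq
    have hpoweq : (τ / σ) ^ (u * (k / d)) = (τ / σ) ^ (r * (k / d)) :=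
      hmodEq' _ hρ0 _ _ hmodeq'
    have hconc : ρ₁ ^ (k / d) = 1 := by
      have h10 := congrArg (· ^ (k / d)) hμ
      rw [mul_pow, ← pow_mul, ← pow_mul, ← hpoweq] at h10
      have h11 : (τ / σ) ^ (u * (k / d)) * 1 = (τ / σ) ^ (u * (k / d)) * ρ₁ ^ (k / d) := by
        rw [mul_one]; exact h10
      exact (mul_left_cancel₀ (pow_ne_zero _ hρ0) h11).symm
    exact hρ₁d hconc
  · -- backward direction
    rintro ⟨hrm, hruk⟩
    have hrodd : ¬ 2 ∣ r := by
      intro h2r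
      have h' := Nat.dvd_gcd h2r hmeven
      rw [hrm] at h'
      omega
    have hkodd : ¬ 2 ∣ k := by
      intro h2k
      obtain ⟨j, hj⟩ := hu
      have h2ru : (2 : ℤ) ∣ (r : ℤ) - u := by omega
      have h2k' : (2 : ℤ) ∣ (k : ℤ) := by exact_mod_cast h2k
      have h' := Int.dvd_gcd h2ru h2k'
      rw [hruk] at h'
      norm_num at h'
    have hr0 : 0 < r := by
      rcases Nat.eq_zero_or_pos r with h | h
      · rw [h, Nat.gcd_zero_left] at hrm; omega
      · exact h
    have hrq1 : Nat.gcd r (q - 1) = 1 := Nat.Coprime.coprime_dvd_right hq1m hrm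
    have hkoddO : Odd k := Nat.odd_iff.mpr (by omega)
    have hroddO : Odd r := Nat.odd_iff.mpr (by omega)
    have hfn0 : fn 0 = 0 := by
      simp only [hfn]; rw [zero_pow hr0.ne', zero_mul]
    have hNmval : ∀ x : F, x ^ m = -1 → (fn x) ^ m = -1 := by
      intro x hxm
      rw [hfN x hxm, mul_pow, hNm x hxm, ← pow_mul, mul_comm r m, pow_mul, hxm,
        hkoddO.neg_one_pow, hroddO.neg_one_pow]
      ring
    rw [← Finite.injective_iff_bijective]
    intro x y hxy
    rcases eq_or_ne x 0 with rfl | hx0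
    · rcases eq_or_ne y 0 with rfl | hy0
      · rfl
      · exfalso
        rcases hchi y hy0 with h1 | h1
        · rw [hfn0, hfS y h1] at hxy
          exact (mul_ne_zero hcne (pow_ne_zero _ hy0)) hxy.symm
        · rw [hfn0] at hxy
          exact (hfN0 y hy0 h1) hxy.symm
    · rcases eq_or_ne y 0 with rfl | hy0
      · exfalso
        rcases hchi x hx0 with h1 | h1
        · rw [hfn0, hfS x h1] at hxy
          exact (mul_ne_zero hcne (pow_ne_zero _ hx0)) hxy
        · rw [hfn0] at hxy
          exact (hfN0 x hx0 h1) hxy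
      · rcases hchi x hx0 with hxm | hxm <;> rcases hchi y hy0 with hym | hym
        · -- both squares
          have h1 : c * x ^ r = c * y ^ r := by
            rw [← hfS x hxm, ← hfS y hym]; exact hxy
          have h2' : x ^ r = y ^ r := mul_left_cancel₀ hcne h1
          have ht1 : (x / y) ^ r = 1 := by
            rw [div_pow, h2', div_self (pow_ne_zero _ hy0)]
          have ht2 : (x / y) ^ m = 1 := by
            rw [div_pow, hxm, hym, div_one]
          have h' := hcollapse r m hrm (x / y) ht1 ht2
          exact (div_eq_one_iff_eq hy0).mp h'
        · exfalso
          have e1 : (fn x) ^ m = 1 := hSm x hxm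
          have e2 : (fn y) ^ m = -1 := hNmval y hym
          rw [hxy, e2] at e1
          exact hneg e1
        · exfalso
          have e1 : (fn x) ^ m = -1 := hNmval x hxm
          have e2 : (fn y) ^ m = 1 := hSm y hym
          rw [hxy, e2] at e1
          exact hneg e1.symm
        · -- both nonsquares
          have hE1 := hstar x hx0 hxm
          have hE2 := hstar y hy0 hym
          set τ := x ^ (q - 1) with hτ
          set σ := y ^ (q - 1) with hσ
          have hτ0 : τ ≠ 0 := pow_ne_zero _ hx0
          have hσ0 : σ ≠ 0 := pow_ne_zero _ hy0
          have hτk : τ ^ k = -1 := by rw [hτ, ← pow_mul, ← hmdef]; exact hxm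
          have hσk : σ ^ k = -1 := by rw [hσ, ← pow_mul, ← hmdef]; exact hym
          have h7 : (-τ ^ r) * (c / 2 * σ ^ u) = (-σ ^ r) * (c / 2 * τ ^ u) := by
            rw [← hE1, ← hE2, hxy]
            ring
          have h7' : τ ^ r * σ ^ u = σ ^ r * τ ^ u := by
            apply mul_left_cancel₀ (neg_ne_zero.mpr ha0)
            linear_combination h7
          have hρr : (τ / σ) ^ r = (τ / σ) ^ u := by
            rw [div_pow, div_pow, div_eq_div_iff (pow_ne_zero _ hσ0) (pow_ne_zero _ hσ0)]
            linear_combination h7'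
          have hρk : (τ / σ) ^ k = 1 := by
            rw [div_pow, hτk, hσk, neg_div_neg_eq, div_one]
          have hordk : orderOf (τ / σ) ∣ k := orderOf_dvd_of_pow_eq_one hρk
          have hρ0 : τ / σ ≠ 0 := div_ne_zero hτ0 hσ0
          have hmod : r ≡ u [MOD orderOf (τ / σ)] := hmodEq _ hρ0 _ _ hρr
          have hdvdZ : (orderOf (τ / σ) : ℤ) ∣ (r : ℤ) - u := by
            have h' := hmod.dvd
            rw [show (r : ℤ) - u = -((u : ℤ) - r) by ring]
            exact dvd_neg.mpr h'
          have hdvdK : (orderOf (τ / σ) : ℤ) ∣ (k : ℤ) := Int.natCast_dvd_natCast.mpr hordk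
          have h1 := Int.dvd_gcd hdvdZ hdvdK
          rw [hruk] at h1
          have hone : orderOf (τ / σ) ∣ 1 := by exact_mod_cast h1
          have hρ1 : τ / σ = 1 := orderOf_eq_one_iff.mp (Nat.dvd_one.mp hone)
          have hτσ : τ = σ := by
            field_simp at hρ1
            exact hρ1
          have hbeq : x ^ ((q - 1) * u) = y ^ ((q - 1) * u) := by
            rw [pow_mul, pow_mul, ← hτ, ← hσ, hτσ]
          have h8 : x ^ r * (c - 2 * y ^ ((q - 1) * u)) =
              y ^ r * (c - 2 * y ^ ((q - 1) * u)) := by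
            have h9 := hxy
            rw [hfN x hxm, hfN y hym, hbeq] at h9
            exact h9
          have h10 : x ^ r = y ^ r := mul_right_cancel₀ (hNne y hym) h8
          have ht1 : (x / y) ^ r = 1 := by
            rw [div_pow, h10, div_self (pow_ne_zero _ hy0)]
          have ht2 : (x / y) ^ (q - 1) = 1 := by
            rw [div_pow, ← hτ, ← hσ, hτσ, div_self hσ0]
          have h' := hcollapse r (q - 1) hrq1 (x / y) ht1 ht2
          exact (div_eq_one_iff_eq hy0).mp h'
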